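/- There exists a family (I_{k,n})_{k,n ∈ ℕ} of infinite subsets of ℕ such that: (i) k < min I_{k,n} for all k,n; (ii) for each fixed k, the sets (I_{k,n})_n are pairwise disjoint; (iii) if k ≤ k' and I_{k,n} ∩ I_{k',n'} ≠ ∅ then I_{k',n'} ⊆ I_{k,n}; (iv) if p ∈ I_{k,n} then I_{p,q} ⊆ I_{k,n} for every q ∈ ℕ. -/

import Mathlib

namespace NestedFam

def e (k n : ℕ) : ℕ := 2^(k+1) * 3^n

lemma lt_e (k n : ℕ) : k < e k n := by
  have h1 : k < 2^(k+1) := lt_of_lt_of_le (show k < 2^k from Nat.lt_two_pow_self) (Nat.pow_le_pow_right (by norm_num) (Nat.le_succ k))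
  have h2 : 2^(k+1) ≤ e k n := Nat.le_mul_of_pos_right _ (Nat.pow_pos (by norm_num))
  omega

lemma e_inj {k n k' n' : ℕ} (h : e k n = e k' n') : k = k' ∧ n = n' := by
  have h2 := congrArg (fun m => m.factorization 2) h
  have h3 := congrArg (fun m => m.factorization 3) h
  simp [e, Nat.factorization_mul, pow_ne_zero, Nat.Prime.factorization_pow,
    Nat.prime_two, Nat.prime_three, Finsupp.single_apply] at h2 h3
  omega

inductive Anc : ℕ × ℕ → ℕ × ℕ → Prop
  | refl (a : ℕ × ℕ) : Anc a a
  | step {a : ℕ × ℕ} {k n q : ℕ} : Anc a (k, n) → Anc a (e k n, q)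

lemma anc_fst_le {k n a b : ℕ} (h : Anc (k, n) (a, b)) : k ≤ a := by
  generalize hy : (a, b) = y at h
  induction h generalizing a b with
  | refl => cases hy; rfl
  | @step c d q h ih =>
    injection hy with h1 h2
    have := ih rfl
    have := lt_e c d
    omega

lemma anc_trans {x y z : ℕ × ℕ} (h1 : Anc x y) (h2 : Anc y z) : Anc x z := by
  induction h2 with
  | refl => exact h1
  | step h ih => exact Anc.step ih

lemma anc_inv {x y : ℕ × ℕ} (h : Anc x y) :
    x = y ∨ ∃ c d, Anc x (c, d) ∧ y.1 = e c d := by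
  cases h with
  | refl => exact Or.inl rfl
  | step h => exact Or.inr ⟨_, _, h, rfl⟩

lemma anc_comparable {x y z : ℕ × ℕ} (hx : Anc x z) (hy : Anc y z) :
    Anc x y ∨ Anc y x := by
  induction hy generalizing x with
  | refl => exact Or.inl hx
  | @step k n q h ih =>
    rcases anc_inv hx with rfl | ⟨c, d, hcd, hce⟩
    · exact Or.inr (Anc.step h)
    · simp only at hce
      obtain ⟨rfl, rfl⟩ := e_inj hce.symm
      exact ih hcd

lemma anc_same_fst {k n n' : ℕ} (h : Anc (k, n) (k, n')) : n = n' := by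
  rcases anc_inv h with heq | ⟨c, d, hcd, hce⟩
  · exact (Prod.mk.injEq .. ▸ heq).2
  · have := anc_fst_le hcd
    have := lt_e c d
    simp only at hce
    omega

def I (k n : ℕ) : Set ℕ := {m | ∃ a b, Anc (k, n) (a, b) ∧ m = e a b}

def chain (k n : ℕ) : ℕ → ℕ × ℕ
  | 0 => (k, n)
  | j + 1 => (e (chain k n j).1 (chain k n j).2, 0)

lemma anc_chain (k n j : ℕ) : Anc (k, n) (chain k n j) := by
  induction j with
  | zero => exact Anc.refl _
  | succ j ih => exact Anc.step (by simpa using ih)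

lemma chain_fst_strictMono (k n : ℕ) : StrictMono (fun j => (chain k n j).1) := by
  apply strictMono_nat_of_lt_succ
  intro j
  exact lt_e _ _

theorem main :
    ∃ I : ℕ → ℕ → Set ℕ,
      (∀ k n, (I k n).Infinite) ∧
      (∀ k n, ∀ m ∈ I k n, k < m) ∧
      (∀ k, Pairwise fun n n' => Disjoint (I k n) (I k n')) ∧
      (∀ k k' n n', k ≤ k' → (I k n ∩ I k' n').Nonempty → I k' n' ⊆ I k n) ∧
      (∀ k n p q, p ∈ I k n → I p q ⊆ I k n) := by
  refine ⟨I, ?_, ?_, ?_, ?_, ?_⟩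
  · intro k n
    apply Set.infinite_of_injective_forall_mem
      (f := fun j => (chain k n (j + 1)).1)
    · exact fun i j hij => by
        have := (chain_fst_strictMono k n).injective hij
        omega
    · intro j
      exact ⟨(chain k n j).1, (chain k n j).2, anc_chain k n j, rfl⟩
  · rintro k n m ⟨a, b, h, rfl⟩
    exact lt_of_le_of_lt (anc_fst_le h) (lt_e a b)
  · intro k n n' hnn'
    rw [Set.disjoint_left]
    rintro m ⟨a, b, h1, rfl⟩ ⟨a', b', h2, hm⟩
    obtain ⟨rfl, rfl⟩ := e_inj hm
    rcases anc_comparable h1 h2 with h | h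
    · exact hnn' (anc_same_fst h)
    · exact hnn' (anc_same_fst h).symm
  · rintro k k' n n' hkk' ⟨m, ⟨a, b, h1, rfl⟩, ⟨a', b', h2, hm⟩⟩
    obtain ⟨rfl, rfl⟩ := e_inj hm
    rcases anc_comparable h1 h2 with h | h
    · rintro m' ⟨c, d, h3, rfl⟩
      exact ⟨c, d, anc_trans h h3, rfl⟩
    · have hle := anc_fst_le h
      have : k = k' := le_antisymm hkk' hle
      subst this
      have := anc_same_fst h
      subst this
      exact fun _ h => h
  · rintro k n p q hp m ⟨c, d, h3, rfl⟩
    obtain ⟨a, b, h1, rfl⟩ := hp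
    exact ⟨c, d, anc_trans (Anc.step h1) h3, rfl⟩

end NestedFam

/-- There exists a family `(I_{k,n})_{k,n}` of infinite subsets of `ℕ` such that:
(i) `k < min I_{k,n}` (every element of `I_{k,n}` exceeds `k`);
(ii) for each fixed `k`, the sets `(I_{k,n})_n` are pairwise disjoint;
(iii) if `k ≤ k'` and `I_{k,n} ∩ I_{k',n'} ≠ ∅` then `I_{k',n'} ⊆ I_{k,n}`;
(iv) if `p ∈ I_{k,n}` then `I_{p,q} ⊆ I_{k,n}` for every `q`. -/
theorem exists_nested_family :
    ∃ I : ℕ → ℕ → Set ℕ,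
      (∀ k n, (I k n).Infinite) ∧
      (∀ k n, ∀ m ∈ I k n, k < m) ∧
      (∀ k, Pairwise fun n n' => Disjoint (I k n) (I k n')) ∧
      (∀ k k' n n', k ≤ k' → (I k n ∩ I k' n').Nonempty → I k' n' ⊆ I k n) ∧
      (∀ k n p q, p ∈ I k n → I p q ⊆ I k n) := by
  exact NestedFam.main
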